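/- Let n ≥ 1, let γ ∈ ℝ and β > 0, and let s ∈ ℝⁿ be a fixed unit vector. Let P be the Haar probability measure on the orthogonal group O(n) (real n×n matrices R with R·Rᵀ = I), let G be the probability measure on ℝⁿ with density x ↦ exp(−π‖x‖²), and let E be the probability measure on ℝ with density t ↦ exp(−πt²/β²)/β. Then the pushforward of the product measure P ⊗ G ⊗ E under the map (R, a, e) ↦ (R·a, γ·⟨a, s⟩ + e mod 1) ∈ ℝⁿ × (ℝ/ℤ) is equal to the pushforward of P ⊗ G ⊗ E under the map (R, a, e) ↦ (a, γ·⟨a, R·s⟩ + e mod 1). (In particular, CLWE samples with any fixed unit secret s, after a common random rotation of the sample vectors, are distributed exactly as CLWE samples whose secret is a uniformly random unit vector.) -/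

import Mathlib

open Real MeasureTheory
open scoped Matrix ENNReal

noncomputable instance (n : ℕ) : MeasurableSpace (Matrix (Fin n) (Fin n) ℝ) :=
  inferInstanceAs (MeasurableSpace (Fin n → Fin n → ℝ))

section aux

variable {n : ℕ}

lemma orth_transpose_mul (R : Matrix.orthogonalGroup (Fin n) ℝ) :
    (R : Matrix (Fin n) (Fin n) ℝ)ᵀ * (R : Matrix (Fin n) (Fin n) ℝ) = 1 := by
  have h := Matrix.UnitaryGroup.star_mul_self R
  simpa [Matrix.star_eq_conjTranspose, Matrix.conjTranspose_eq_transpose_of_trivial] using h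

lemma orth_dot (R : Matrix.orthogonalGroup (Fin n) ℝ) (a b : Fin n → ℝ) :
    (R : Matrix (Fin n) (Fin n) ℝ).mulVec a ⬝ᵥ (R : Matrix (Fin n) (Fin n) ℝ).mulVec b
      = a ⬝ᵥ b := by
  rw [Matrix.dotProduct_mulVec]
  have h1 : (R : Matrix (Fin n) (Fin n) ℝ).mulVec a
      = Matrix.vecMul a (R : Matrix (Fin n) (Fin n) ℝ)ᵀ := by
    rw [Matrix.vecMul_transpose]
  rw [h1, Matrix.vecMul_vecMul, orth_transpose_mul, Matrix.vecMul_one]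

lemma orth_sum_mul (R : Matrix.orthogonalGroup (Fin n) ℝ) (a b : Fin n → ℝ) :
    ∑ i, (R : Matrix (Fin n) (Fin n) ℝ).mulVec a i *
        (R : Matrix (Fin n) (Fin n) ℝ).mulVec b i = ∑ i, a i * b i := by
  simpa [dotProduct] using orth_dot R a b

lemma orth_det_ne (R : Matrix.orthogonalGroup (Fin n) ℝ) :
    (R : Matrix (Fin n) (Fin n) ℝ).det ≠ 0 := by
  intro h
  have := orth_transpose_mul R
  have h2 := congrArg Matrix.det this
  rw [Matrix.det_mul, Matrix.det_transpose, h, Matrix.det_one] at h2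
  simp at h2

lemma orth_abs_det (R : Matrix.orthogonalGroup (Fin n) ℝ) :
    |(R : Matrix (Fin n) (Fin n) ℝ).det| = 1 := by
  have := orth_transpose_mul R
  have h2 := congrArg Matrix.det this
  rw [Matrix.det_mul, Matrix.det_transpose, Matrix.det_one] at h2
  have : |(R : Matrix (Fin n) (Fin n) ℝ).det| ^ 2 = 1 := by
    rw [← abs_pow]; rw [sq]; rw [h2]; simp
  nlinarith [abs_nonneg (R : Matrix (Fin n) (Fin n) ℝ).det]

lemma orth_mulVec_measurePreserving (R : Matrix.orthogonalGroup (Fin n) ℝ) :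
    MeasurePreserving (fun a : Fin n → ℝ => (R : Matrix (Fin n) (Fin n) ℝ).mulVec a)
      volume volume := by
  have hdet := orth_det_ne R
  have h := Real.map_matrix_volume_pi_eq_smul_volume_pi hdet
  have habs := orth_abs_det R
  constructor
  · exact (Matrix.toLin' (R : Matrix (Fin n) (Fin n) ℝ)).continuous_of_finiteDimensional.measurable
  · have : (fun a : Fin n → ℝ => (R : Matrix (Fin n) (Fin n) ℝ).mulVec a)
        = Matrix.toLin' (R : Matrix (Fin n) (Fin n) ℝ) := by
      funext a; simp [Matrix.toLin'_apply]
    rw [this, h, abs_inv, habs]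
    simp

lemma gauss_density_measurable {n : ℕ} :
    Measurable (fun x : Fin n → ℝ => ENNReal.ofReal (Real.exp (-π * ∑ i, x i ^ 2))) := by
  apply Measurable.ennreal_ofReal
  apply Real.measurable_exp.comp
  apply Measurable.const_mul
  exact Finset.measurable_sum _ fun i _ => (measurable_pi_apply i).pow_const 2

lemma orth_gauss_invariant (R : Matrix.orthogonalGroup (Fin n) ℝ) :
    (volume.withDensity fun x : Fin n → ℝ =>
        ENNReal.ofReal (Real.exp (-π * ∑ i, x i ^ 2))).map
      (fun a => (R : Matrix (Fin n) (Fin n) ℝ).mulVec a) =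
    volume.withDensity fun x : Fin n → ℝ =>
        ENNReal.ofReal (Real.exp (-π * ∑ i, x i ^ 2)) := by
  set w : (Fin n → ℝ) → ℝ≥0∞ := fun x => ENNReal.ofReal (Real.exp (-π * ∑ i, x i ^ 2)) with hw
  set T : (Fin n → ℝ) → (Fin n → ℝ) := fun a => (R : Matrix (Fin n) (Fin n) ℝ).mulVec a with hT
  have hTmp : MeasurePreserving T volume volume := orth_mulVec_measurePreserving R
  have hwm : Measurable w := gauss_density_measurable
  ext A hA
  rw [Measure.map_apply hTmp.measurable hA,
    withDensity_apply _ (hTmp.measurable hA), withDensity_apply _ hA]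
  have hwT : ∀ x, w (T x) = w x := by
    intro x
    have : ∑ i, (T x) i ^ 2 = ∑ i, x i ^ 2 := by
      simpa [sq] using orth_sum_mul R x x
    simp [hw, this]
  calc ∫⁻ x in T ⁻¹' A, w x ∂volume = ∫⁻ x in T ⁻¹' A, w (T x) ∂volume := by
        apply lintegral_congr; intro x; rw [hwT]
    _ = ∫⁻ y in A, w y ∂volume := hTmp.setLIntegral_comp_preimage hA hwm

end aux

/-- Randomizing the CLWE secret direction: with `P` the Haar probability measure on the
orthogonal group `O(n)` (characterized as a left-invariant probability measure), `G` the
standard Gaussian on `ℝⁿ` and `E` the Gaussian of width `β` on `ℝ`, the distribution of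
`(R·a, γ⟨a,s⟩ + e mod 1)` equals the distribution of `(a, γ⟨a,R·s⟩ + e mod 1)`. -/
theorem stmt_11 (n : ℕ) (hn : 1 ≤ n) (s : Fin n → ℝ) (hs : ∑ i, s i ^ 2 = 1)
    (γ β : ℝ) (hβ : 0 < β)
    (P : Measure (Matrix.orthogonalGroup (Fin n) ℝ))
    (hP : IsProbabilityMeasure P)
    (hinv : ∀ g : Matrix.orthogonalGroup (Fin n) ℝ,
      P.map (fun R => g * R) = P) :
    let G : Measure (Fin n → ℝ) :=
      volume.withDensity fun x => ENNReal.ofReal (Real.exp (-π * ∑ i, x i ^ 2))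
    let E : Measure ℝ :=
      volume.withDensity fun t => ENNReal.ofReal (Real.exp (-π * t ^ 2 / β ^ 2) / β)
    Measure.map
        (fun p : Matrix.orthogonalGroup (Fin n) ℝ × (Fin n → ℝ) × ℝ =>
          ((p.1 : Matrix (Fin n) (Fin n) ℝ).mulVec p.2.1,
            ((γ * ∑ i, p.2.1 i * s i + p.2.2 : ℝ) : AddCircle (1 : ℝ))))
        (P.prod (G.prod E)) =
      Measure.map
        (fun p : Matrix.orthogonalGroup (Fin n) ℝ × (Fin n → ℝ) × ℝ =>
          (p.2.1,
            ((γ * ∑ i, p.2.1 i * ((p.1 : Matrix (Fin n) (Fin n) ℝ).mulVec s) i + p.2.2 : ℝ) :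
              AddCircle (1 : ℝ))))
        (P.prod (G.prod E)) := by
  intro G E
  set μ : Measure ((Fin n → ℝ) × ℝ) := G.prod E with hμ
  -- per-rotation maps
  set f : Matrix.orthogonalGroup (Fin n) ℝ → ((Fin n → ℝ) × ℝ) → ((Fin n → ℝ) × AddCircle (1 : ℝ)) :=
    fun R q => ((R : Matrix (Fin n) (Fin n) ℝ).mulVec q.1,
      ((γ * ∑ i, q.1 i * s i + q.2 : ℝ) : AddCircle (1 : ℝ))) with hf
  set g : Matrix.orthogonalGroup (Fin n) ℝ → ((Fin n → ℝ) × ℝ) → ((Fin n → ℝ) × AddCircle (1 : ℝ)) :=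
    fun R q => (q.1,
      ((γ * ∑ i, q.1 i * ((R : Matrix (Fin n) (Fin n) ℝ).mulVec s) i + q.2 : ℝ) : AddCircle (1 : ℝ))) with hg
  have hmulVec_meas : ∀ R : Matrix.orthogonalGroup (Fin n) ℝ,
      Measurable fun a : Fin n → ℝ => (R : Matrix (Fin n) (Fin n) ℝ).mulVec a :=
    fun R => (orth_mulVec_measurePreserving R).measurable
  have hfm : ∀ R, Measurable (f R) := by
    intro R
    apply Measurable.prod
    · exact (hmulVec_meas R).comp measurable_fst
    · apply AddCircle.measurable_mk'.comp
      apply Measurable.add _ measurable_snd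
      apply Measurable.const_mul
      exact Finset.measurable_sum _ fun i _ =>
        ((measurable_pi_apply i).comp measurable_fst).mul_const _
  have hgm : ∀ R, Measurable (g R) := by
    intro R
    apply Measurable.prod
    · exact measurable_fst
    · apply AddCircle.measurable_mk'.comp
      apply Measurable.add _ measurable_snd
      apply Measurable.const_mul
      exact Finset.measurable_sum _ fun i _ =>
        ((measurable_pi_apply i).comp measurable_fst).mul_const _
  -- key per-R equality of pushforwards
  have key : ∀ R, μ.map (f R) = μ.map (g R) := by
    intro R
    have hTG : MeasurePreserving
        (fun a : Fin n → ℝ => (R : Matrix (Fin n) (Fin n) ℝ).mulVec a) G G :=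
      ⟨hmulVec_meas R, orth_gauss_invariant R⟩
    have hh : MeasurePreserving
        (Prod.map (fun a : Fin n → ℝ => (R : Matrix (Fin n) (Fin n) ℝ).mulVec a) (id : ℝ → ℝ))
        μ μ := hTG.prod (MeasurePreserving.id E)
    have hcomp : f R = (g R) ∘
        (Prod.map (fun a : Fin n → ℝ => (R : Matrix (Fin n) (Fin n) ℝ).mulVec a) (id : ℝ → ℝ)) := by
      funext q
      have hsum : ∑ i, ((R : Matrix (Fin n) (Fin n) ℝ).mulVec q.1) i *
          ((R : Matrix (Fin n) (Fin n) ℝ).mulVec s) i = ∑ i, q.1 i * s i :=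
        orth_sum_mul R q.1 s
      simp [hf, hg, Prod.map, hsum]
    rw [hcomp, ← Measure.map_map (hgm R) hh.measurable, hh.map_eq]
  -- measurability of the global maps
  have hentry : ∀ i j : Fin n,
      Measurable (fun p : Matrix.orthogonalGroup (Fin n) ℝ × (Fin n → ℝ) × ℝ =>
        (p.1 : Matrix (Fin n) (Fin n) ℝ) i j) := fun i j =>
    (measurable_pi_apply j).comp ((measurable_pi_apply i).comp
      (measurable_subtype_coe.comp measurable_fst))
  have hF : Measurable (fun p : Matrix.orthogonalGroup (Fin n) ℝ × (Fin n → ℝ) × ℝ =>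
      ((p.1 : Matrix (Fin n) (Fin n) ℝ).mulVec p.2.1,
        ((γ * ∑ i, p.2.1 i * s i + p.2.2 : ℝ) : AddCircle (1 : ℝ)))) := by
    apply Measurable.prod
    · have h1 : (fun p : Matrix.orthogonalGroup (Fin n) ℝ × (Fin n → ℝ) × ℝ =>
          (p.1 : Matrix (Fin n) (Fin n) ℝ).mulVec p.2.1)
          = fun p => fun i => ∑ j, (p.1 : Matrix (Fin n) (Fin n) ℝ) i j * p.2.1 j := by
        funext p i; simp [Matrix.mulVec, dotProduct]
      rw [h1]
      exact measurable_pi_lambda _ fun i => Finset.measurable_sum _ fun j _ =>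
        (hentry i j).mul ((measurable_pi_apply j).comp (measurable_fst.comp measurable_snd))
    · apply AddCircle.measurable_mk'.comp
      apply Measurable.add _ (measurable_snd.comp measurable_snd)
      apply Measurable.const_mul
      exact Finset.measurable_sum _ fun i _ =>
        ((measurable_pi_apply i).comp (measurable_fst.comp measurable_snd)).mul_const _
  have hFg : Measurable (fun p : Matrix.orthogonalGroup (Fin n) ℝ × (Fin n → ℝ) × ℝ =>
      (p.2.1,
        ((γ * ∑ i, p.2.1 i * ((p.1 : Matrix (Fin n) (Fin n) ℝ).mulVec s) i + p.2.2 : ℝ) :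
          AddCircle (1 : ℝ)))) := by
    refine Measurable.prod ?_ ?_
    · exact measurable_snd.fst
    · apply AddCircle.measurable_mk'.comp
      apply Measurable.add _ (measurable_snd.comp measurable_snd)
      apply Measurable.const_mul
      apply Finset.measurable_sum
      intro i _
      apply Measurable.mul
      · exact (measurable_pi_apply i).comp (measurable_fst.comp measurable_snd)
      · have h2 : (fun p : Matrix.orthogonalGroup (Fin n) ℝ × (Fin n → ℝ) × ℝ =>
            ((p.1 : Matrix (Fin n) (Fin n) ℝ).mulVec s) i)
            = fun p => ∑ j, (p.1 : Matrix (Fin n) (Fin n) ℝ) i j * s j := by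
          funext p; simp [Matrix.mulVec, dotProduct]
        rw [h2]
        exact Finset.measurable_sum _ fun j _ => (hentry i j).mul_const _
  -- conclude
  ext A hA
  rw [Measure.map_apply hF hA, Measure.map_apply hFg hA,
    Measure.prod_apply (hF hA), Measure.prod_apply (hFg hA)]
  apply lintegral_congr
  intro R
  have h1 : (Prod.mk R ⁻¹' ((fun p : Matrix.orthogonalGroup (Fin n) ℝ × (Fin n → ℝ) × ℝ =>
      ((p.1 : Matrix (Fin n) (Fin n) ℝ).mulVec p.2.1,
        ((γ * ∑ i, p.2.1 i * s i + p.2.2 : ℝ) : AddCircle (1 : ℝ)))) ⁻¹' A)) = f R ⁻¹' A := rfl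
  have h2 : (Prod.mk R ⁻¹' ((fun p : Matrix.orthogonalGroup (Fin n) ℝ × (Fin n → ℝ) × ℝ =>
      (p.2.1,
        ((γ * ∑ i, p.2.1 i * ((p.1 : Matrix (Fin n) (Fin n) ℝ).mulVec s) i + p.2.2 : ℝ) :
          AddCircle (1 : ℝ)))) ⁻¹' A)) = g R ⁻¹' A := rfl
  rw [h1, h2, ← Measure.map_apply (hfm R) hA, ← Measure.map_apply (hgm R) hA, key R]
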